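/- Given k NFA A_0, ..., A_{k−1}, a staggered cut exists if and only if ⋂_{i∈[k]} L(A_i) = ∅. That is: (1) if the intersection is empty, a staggered cut exists; (2) if the intersection is nonempty, no staggered cut exists. -/

import Mathlib

private lemma evalFrom_mem_iff {α : Type*} {σ : Type*} (M : NFA α σ) (w : List α) :
    ∀ (S : Set σ) (f : σ), f ∈ M.evalFrom S w ↔ ∃ p ∈ S, f ∈ M.evalFrom {p} w := by
  induction w with
  | nil => intro S f; simp
  | cons a w ih =>
    intro S f
    have h1 : M.evalFrom S (a :: w) = M.evalFrom (M.stepSet S a) w := rfl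
    rw [h1, ih]
    constructor
    · rintro ⟨p, hp, hf⟩
      rw [NFA.mem_stepSet] at hp
      obtain ⟨t, ht, hpt⟩ := hp
      refine ⟨t, ht, ?_⟩
      have h2 : M.evalFrom {t} (a :: w) = M.evalFrom (M.stepSet {t} a) w := rfl
      rw [h2, ih]
      exact ⟨p, by rw [NFA.mem_stepSet]; exact ⟨t, rfl, hpt⟩, hf⟩
    · rintro ⟨t, ht, hf⟩
      have h2 : M.evalFrom {t} (a :: w) = M.evalFrom (M.stepSet {t} a) w := rfl
      rw [h2, ih] at hf
      obtain ⟨p, hp, hf⟩ := hf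
      rw [NFA.mem_stepSet] at hp
      obtain ⟨t', ht', hpt⟩ := hp
      cases ht'
      exact ⟨p, by rw [NFA.mem_stepSet]; exact ⟨t, ht, hpt⟩, hf⟩

/-- A staggered cut for `k` NFA `M i` with single initial states `s i` exists
if and only if the intersection of their languages is empty.  A staggered cut
is a family `R i σ ⊆ Q₀ × ⋯ × Q_{k-1}` such that (a) all `R 0 σ` coincide,
(b) the tuple of initial states lies in `R 0 σ`, (c) `R 0 σ` contains no tuple
of final states, and (d) if `q ∈ R i σ` and `(q i, σ, p) ∈ Δ i`, then the tuple
obtained from `q` by replacing its `i`-th component with `p` lies in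
`R (i+1 mod k) σ`. -/
theorem staggeredCut_iff_empty_intersection {A : Type*} [Nonempty A]
    (k : ℕ) [NeZero k] (Q : Fin k → Type*) (M : ∀ i, NFA A (Q i))
    (s : ∀ i, Q i) (hs : ∀ i, (M i).start = {s i}) :
    (∃ R : Fin k → A → Set (∀ i, Q i),
      (∀ σ σ' : A, R 0 σ = R 0 σ') ∧
      (∀ σ : A, s ∈ R 0 σ) ∧
      (∀ (σ : A) (q : ∀ i, Q i), q ∈ R 0 σ → ¬ ∀ i, q i ∈ (M i).accept) ∧
      (∀ (i : Fin k) (σ : A) (q : ∀ j, Q j), q ∈ R i σ →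
        ∀ p ∈ (M i).step (q i) σ, Function.update q i p ∈ R (i + 1) σ)) ↔
    (⋂ i, ((M i).accepts : Set (List A))) = ∅ := by
  have hk : 0 < k := Nat.pos_of_ne_zero (NeZero.ne k)
  constructor
  · rintro ⟨R, hR0, hRs, hRacc, hRstep⟩
    by_contra h
    rw [Set.eq_empty_iff_forall_notMem] at h
    push_neg at h
    obtain ⟨w, hw⟩ := h
    have hw : ∀ i, w ∈ (M i).accepts := Set.mem_iInter.1 hw
    obtain ⟨σ₀⟩ := ‹Nonempty A›
    -- one staggered round
    open Fin.NatCast in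
    have stag : ∀ (σ : A) (q p : ∀ i, Q i), q ∈ R 0 σ →
        (∀ i, p i ∈ (M i).step (q i) σ) → p ∈ R 0 σ := by
      intro σ q p hq hp
      have main : ∀ m, m ≤ k →
          (fun j : Fin k => if j.val < m then p j else q j) ∈ R (m : Fin k) σ := by
        intro m
        induction m with
        | zero =>
          intro _
          have : (fun j : Fin k => if j.val < 0 then p j else q j) = q := by
            funext j; simp
          rw [this]
          simpa using hq
        | succ m ih =>
          intro hm
          have hmk : m < k := hm
          have hprev := ih (le_of_lt hmk)
          have hval : ((m : Fin k)).val = m := Fin.val_cast_of_lt hmk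
          have hstep := hRstep (m : Fin k) σ _ hprev (p (m : Fin k)) (by
            simp only [hval, lt_irrefl, if_neg (lt_irrefl m)]
            exact hp (m : Fin k))
          have hcast : ((m : Fin k) + 1 : Fin k) = ((m + 1 : ℕ) : Fin k) := by
            push_cast; ring
          rw [hcast] at hstep
          convert hstep using 1
          funext j
          rcases eq_or_ne j (m : Fin k) with rfl | hj
          · simp [Function.update_self, hval]
          · rw [Function.update_of_ne hj]
            have hjm : j.val ≠ m := by
              intro hc
              exact hj (Fin.ext (by rw [hc, hval]))
            by_cases hlt : j.val < m
            · rw [if_pos hlt, if_pos (Nat.lt_succ_of_lt hlt)]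
            · rw [if_neg hlt, if_neg (by omega)]
      have := main k le_rfl
      have hc : ((k : ℕ) : Fin k) = 0 := Fin.natCast_self k
      rw [hc] at this
      have heq : (fun j : Fin k => if j.val < k then p j else q j) = p := by
        funext j; rw [if_pos j.isLt]
      rwa [heq] at this
    -- main induction on the word
    have key : ∀ (w : List A) (q : ∀ i, Q i) (σ : A), q ∈ R 0 σ →
        (∀ i, ∃ f ∈ (M i).accept, f ∈ (M i).evalFrom {q i} w) → False := by
      intro w
      induction w with
      | nil =>
        intro q σ hq hacc
        refine hRacc σ q hq fun i => ?_
        obtain ⟨f, hf, hfe⟩ := hacc i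
        simp only [NFA.evalFrom_nil, Set.mem_singleton_iff] at hfe
        rwa [← hfe]
      | cons a w ih =>
        intro q σ hq hacc
        have hchoose : ∀ i, ∃ p ∈ (M i).step (q i) a,
            ∃ f ∈ (M i).accept, f ∈ (M i).evalFrom {p} w := by
          intro i
          obtain ⟨f, hf, hfe⟩ := hacc i
          have h1 : (M i).evalFrom {q i} (a :: w)
              = (M i).evalFrom ((M i).stepSet {q i} a) w := rfl
          rw [h1, evalFrom_mem_iff] at hfe
          obtain ⟨p, hp, hfp⟩ := hfe
          rw [NFA.mem_stepSet] at hp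
          obtain ⟨t, ht, hpt⟩ := hp
          cases ht
          exact ⟨p, hpt, f, hf, hfp⟩
        choose p hp hfp using hchoose
        have hq' : q ∈ R 0 a := by rw [hR0 a σ]; exact hq
        exact ih p a (stag a q p hq' hp) hfp
    -- conclude
    refine key w s σ₀ (hRs σ₀) fun i => ?_
    have := hw i
    rw [NFA.mem_accepts, hs i] at this
    exact this
  · intro h
    refine ⟨fun i σ => {q | ∃ w : List A,
      ∀ j : Fin k, q j ∈ (M j).evalFrom {s j} (if j.val < i.val then w ++ [σ] else w)},
      ?_, ?_, ?_, ?_⟩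
    · intro σ σ'
      ext q
      simp
    · intro σ
      exact ⟨[], fun j => by simp⟩
    · rintro σ q ⟨w, hwq⟩ hacc
      have : w ∈ ⋂ i, ((M i).accepts : Set (List A)) := by
        refine Set.mem_iInter.2 ?_
        intro i
        show w ∈ (M i).accepts
        rw [NFA.mem_accepts, hs i]
        have := hwq i
        simp only [Fin.val_zero, Nat.not_lt_zero, if_neg (Nat.not_lt_zero _)] at this
        exact ⟨q i, hacc i, this⟩
      rw [h] at this
      exact this
    · rintro i σ q ⟨w, hwq⟩ p hp
      by_cases hik : i.val + 1 < k
      · refine ⟨w, fun j => ?_⟩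
        have hval : ((i + 1 : Fin k)).val = i.val + 1 := by
          have h1 : 1 % k = 1 := Nat.mod_eq_of_lt (by omega)
          rw [Fin.val_add, Fin.val_one', h1, Nat.mod_eq_of_lt hik]
        rw [hval]
        rcases eq_or_ne j i with rfl | hj
        · rw [Function.update_self, if_pos (Nat.lt_succ_self _),
            NFA.evalFrom_append, NFA.evalFrom_singleton, NFA.mem_stepSet]
          refine ⟨q j, ?_, hp⟩
          have := hwq j
          rwa [if_neg (lt_irrefl _)] at this
        · rw [Function.update_of_ne hj]
          have hjm : j.val ≠ i.val := fun hc => hj (Fin.ext hc)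
          have := hwq j
          by_cases hlt : j.val < i.val
          · rw [if_pos hlt] at this
            rwa [if_pos (Nat.lt_succ_of_lt hlt)]
          · rw [if_neg hlt] at this
            rwa [if_neg (by omega)]
      · -- wrap-around: i.val + 1 = k, i + 1 = 0
        have hik' : i.val + 1 = k := by have := i.isLt; omega
        have hi0 : (i + 1 : Fin k) = 0 := by
          apply Fin.ext
          rw [Fin.val_add, Fin.val_one', Fin.val_zero]
          rcases Nat.lt_or_ge 1 k with hk1 | hk1
          · rw [Nat.mod_eq_of_lt hk1, hik', Nat.mod_self]
          · have hk1' : k = 1 := by omega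
            subst hk1'
            simp
        rw [hi0]
        refine ⟨w ++ [σ], fun j => ?_⟩
        rw [if_neg (by simp)]
        rcases eq_or_ne j i with rfl | hj
        · rw [Function.update_self, NFA.evalFrom_append, NFA.evalFrom_singleton, NFA.mem_stepSet]
          refine ⟨q j, ?_, hp⟩
          have := hwq j
          rwa [if_neg (lt_irrefl _)] at this
        · rw [Function.update_of_ne hj]
          have hjlt : j.val < i.val := by
            have hjm : j.val ≠ i.val := fun hc => hj (Fin.ext hc)
            have := j.isLt
            omega
          have := hwq j
          rwa [if_pos hjlt] at this
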